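/- arXiv:1912.08623 — 6 statements merged into one kernel-verified Lean document; each statement's English description precedes it below -/
import Mathlib

section
/- For N = 0, with γ = α/ε + 1 and q = α(1 - δ/ε) and ε ≠ 0, the sequence c_n defined by c_0 = 1 and c_n / c_{n-1} = ((α/ε - 1 + n)(δ - 1 + n)) / ((γ + δ - 1 + n) n) satisfies the three-term recurrence R_n c_n + Q_{n-1} c_{n-1} + P_{n-2} c_{n-2} = 0 for all n ≥ 2. -/
set_option maxHeartbeats 1600000 in
private lemma heun_aux (a δ ε x : ℂ) (hε : ε ≠ 0)
    (h1 : a + δ + x + 1 ≠ 0) (h2 : a + δ + x + 2 ≠ 0)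
    (hx1 : x + 1 ≠ 0) (hx2 : x + 2 ≠ 0) :
    (-(x + 2) * ((a + 1) + δ + (x + 2) - 1)) *
        ((a - 1 + (x + 2)) * (δ - 1 + (x + 2)) /
          (((a + 1) + δ - 1 + (x + 2)) * (x + 2)) *
        ((a - 1 + (x + 1)) * (δ - 1 + (x + 1)) /
          (((a + 1) + δ - 1 + (x + 1)) * (x + 1))))
      + (-(ε * a * (1 - δ / ε)) + ε * a + ((a + 1) + δ + ε + (x + 2 - 1) - 1) * (x + 2 - 1)) *
        ((a - 1 + (x + 1)) * (δ - 1 + (x + 1)) /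
          (((a + 1) + δ - 1 + (x + 1)) * (x + 1)))
      + (-((δ + (x + 2 - 2)) * (ε * (x + 2 - 2) + ε * a)) / ((a + 1) + δ + (x + 2 - 2)))
      = 0 := by
  have e1 : (a + 1) + δ - 1 + (x + 1) = a + δ + x + 1 := by ring
  have e2 : (a + 1) + δ - 1 + (x + 2) = a + δ + x + 2 := by ring
  have e3 : (a + 1) + δ + (x + 2 - 2) = a + δ + x + 1 := by ring
  rw [e1, e2, e3]
  field_simp
  ring

set_option maxHeartbeats 1600000 in
/-- For N = 0, with γ = α/ε + 1 and q = α(1 - δ/ε) and ε ≠ 0, the sequence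
c_n defined by c_0 = 1 and the two-term ratio satisfies the three-term recurrence
R_n c_n + Q_{n-1} c_{n-1} + P_{n-2} c_{n-2} = 0 for all n ≥ 2. -/
theorem stmt0 (α γ δ ε q : ℂ) (hε : ε ≠ 0)
    (hγ : γ = α / ε + 1) (hq : q = α * (1 - δ / ε))
    (hden : ∀ n : ℕ, γ + δ + (n : ℂ) ≠ 0 ∧ γ + δ - 1 + (n : ℂ) ≠ 0)
    (c : ℕ → ℂ) (hc0 : c 0 = 1)
    (hrat : ∀ n : ℕ, 1 ≤ n →
      c n = ((α / ε - 1 + (n : ℂ)) * (δ - 1 + (n : ℂ))) /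
        ((γ + δ - 1 + (n : ℂ)) * (n : ℂ)) * c (n - 1)) :
    ∀ n : ℕ, 2 ≤ n →
      (-(n : ℂ) * (γ + δ + (n : ℂ) - 1)) * c n
      + (-q + α + (γ + δ + ε + ((n : ℂ) - 1) - 1) * ((n : ℂ) - 1)) * c (n - 1)
      + (-((δ + ((n : ℂ) - 2)) * (ε * ((n : ℂ) - 2) + α)) / (γ + δ + ((n : ℂ) - 2)))
          * c (n - 2) = 0 := by
  intro n hn
  obtain ⟨m, rfl⟩ : ∃ m, n = m + 2 := ⟨n - 2, by omega⟩
  have h1 := hrat (m + 2) (by omega)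
  have h2 := hrat (m + 1) (by omega)
  have e1 : (m + 2 : ℕ) - 1 = m + 1 := by omega
  have e2 : (m + 2 : ℕ) - 2 = m := by omega
  rw [e1] at h1
  rw [e1, e2, h1, h2]
  subst hγ hq
  set x : ℂ := (m : ℂ) with hx
  have hεa : ε * (α / ε) = α := mul_div_cancel₀ α hε
  have hd1 : α / ε + δ + x + 1 ≠ 0 := fun h => (hden m).1 (by push_cast; linear_combination h)
  have hd2 : α / ε + δ + x + 2 ≠ 0 := fun h =>
    (hden (m + 1)).1 (by push_cast; linear_combination h)
  have hm1 : x + 1 ≠ 0 := Nat.cast_add_one_ne_zero m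
  have hm2 : x + 2 ≠ 0 := by
    have hh := Nat.cast_add_one_ne_zero (R := ℂ) (m + 1)
    push_cast at hh
    intro h; exact hh (by linear_combination h)
  have key := heun_aux (α / ε) δ ε x hε hd1 hd2 hm1 hm2
  rw [hεa] at key
  push_cast
  linear_combination c m * key
end

section
/- Let ε ≠ 0 and consider the polynomial in n given by -(α/ε - 1 + n)(δ - 1 + n)∏_{k=1}^N(e_k + n) + Q_{n-1}∏_{k=1}^N(e_k - 1 + n) - ε(n-1)∏_{k=1}^N(e_k - 2 + n) with Q_n = -q + α + (γ + δ + ε + n - 1)n. Its coefficient of n^{N+1} equals γ - N - 1 - α/ε; hence if the polynomial vanishes identically then γ = α/ε + 1 + N. -/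
open Polynomial Finset

lemma prodMonic (s : Finset ℕ) (a : ℕ → ℂ) :
    (∏ k ∈ s, (C (a k) + X) : ℂ[X]).Monic :=
  monic_prod_of_monic _ _ (fun i _ => by rw [add_comm]; exact monic_X_add_C _)

lemma prodDeg (s : Finset ℕ) (a : ℕ → ℂ) :
    (∏ k ∈ s, (C (a k) + X) : ℂ[X]).natDegree = s.card := by
  rw [natDegree_prod_of_monic _ _ (fun i _ => by rw [add_comm]; exact monic_X_add_C _)]
  simp [natDegree_X_add_C, add_comm]

lemma prodNext (s : Finset ℕ) (a : ℕ → ℂ) :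
    (∏ k ∈ s, (C (a k) + X) : ℂ[X]).nextCoeff = ∑ k ∈ s, a k := by
  rw [Monic.nextCoeff_prod _ _ (fun i _ => by rw [add_comm]; exact monic_X_add_C _)]
  simp [add_comm, nextCoeff_X_add_C]

/-- The coefficient of n^{N+1} of the reduced-recurrence polynomial equals
γ - N - 1 - α/ε; hence if the polynomial vanishes identically then γ = α/ε + 1 + N. -/
theorem stmt4 (N : ℕ) (α γ δ ε q : ℂ) (hε : ε ≠ 0) (e : ℕ → ℂ) :
    (-((C (α / ε - 1) + X) * (C (δ - 1) + X) * ∏ k ∈ Icc 1 N, (C (e k) + X))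
      + (C (-q + α) + (C (γ + δ + ε - 2) + X) * (X - 1)) *
          ∏ k ∈ Icc 1 N, (C (e k - 1) + X)
      - C ε * (X - 1) * ∏ k ∈ Icc 1 N, (C (e k - 2) + X) : ℂ[X]).coeff (N + 1)
      = γ - N - 1 - α / ε
    ∧ ((-((C (α / ε - 1) + X) * (C (δ - 1) + X) * ∏ k ∈ Icc 1 N, (C (e k) + X))
      + (C (-q + α) + (C (γ + δ + ε - 2) + X) * (X - 1)) *
          ∏ k ∈ Icc 1 N, (C (e k - 1) + X)
      - C ε * (X - 1) * ∏ k ∈ Icc 1 N, (C (e k - 2) + X) : ℂ[X]) = 0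
      → γ = α / ε + 1 + N) := by
  have key : (-((C (α / ε - 1) + X) * (C (δ - 1) + X) * ∏ k ∈ Icc 1 N, (C (e k) + X))
      + (C (-q + α) + (C (γ + δ + ε - 2) + X) * (X - 1)) *
          ∏ k ∈ Icc 1 N, (C (e k - 1) + X)
      - C ε * (X - 1) * ∏ k ∈ Icc 1 N, (C (e k - 2) + X) : ℂ[X]).coeff (N + 1)
      = γ - N - 1 - α / ε := by
    have hcard : (Icc 1 N).card = N := by simp
    set P0 : ℂ[X] := ∏ k ∈ Icc 1 N, (C (e k) + X) with hP0
    set P1 : ℂ[X] := ∏ k ∈ Icc 1 N, (C (e k - 1) + X) with hP1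
    set P2 : ℂ[X] := ∏ k ∈ Icc 1 N, (C (e k - 2) + X) with hP2
    have hm0 : P0.Monic := prodMonic _ _
    have hm1 : P1.Monic := prodMonic _ _
    have hm2 : P2.Monic := prodMonic _ _
    have hd0 : P0.natDegree = N := by rw [hP0, prodDeg, hcard]
    have hd1 : P1.natDegree = N := by rw [hP1, prodDeg, hcard]
    have hd2 : P2.natDegree = N := by rw [hP2, prodDeg, hcard]
    have hn0 : P0.nextCoeff = ∑ k ∈ Icc 1 N, e k := prodNext _ _
    have hn1 : P1.nextCoeff = (∑ k ∈ Icc 1 N, e k) - N := by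
      rw [hP1, prodNext, Finset.sum_sub_distrib]
      simp [hcard]
    set c : ℂ := γ + δ + ε - 2 with hc
    set f : ℂ[X] := C (-q + α) + (C c + X) * (X - 1) with hfdef
    have hf : f = X ^ 2 + C (c - 1) * X + C (-q + α - c) := by
      rw [hfdef]; simp only [map_sub, map_add, map_neg, map_one]; ring
    have hfd : f.natDegree = 2 := by rw [hf]; compute_degree!
    have hfm : f.Monic := by
      rw [Monic, leadingCoeff, hfd, hf]
      simp [coeff_C, coeff_one]
    have hfn : f.nextCoeff = c - 1 := by
      rw [nextCoeff_of_natDegree_pos (by rw [hfd]; norm_num), hfd, hf]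
      simp [coeff_C, coeff_one]
    -- term A
    have ha : (C (α / ε - 1) + X : ℂ[X]).Monic := by rw [add_comm]; exact monic_X_add_C _
    have hb : (C (δ - 1) + X : ℂ[X]).Monic := by rw [add_comm]; exact monic_X_add_C _
    have hAm : ((C (α / ε - 1) + X) * (C (δ - 1) + X) * P0).Monic :=
      (ha.mul hb).mul hm0
    have hAd : ((C (α / ε - 1) + X) * (C (δ - 1) + X) * P0).natDegree = N + 2 := by
      have d1 : (C (α / ε - 1) + X : ℂ[X]).natDegree = 1 := by compute_degree!
      have d2 : (C (δ - 1) + X : ℂ[X]).natDegree = 1 := by compute_degree!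
      rw [(ha.mul hb).natDegree_mul hm0, ha.natDegree_mul hb, hd0, d1, d2]
      ring
    have hAc : ((C (α / ε - 1) + X) * (C (δ - 1) + X) * P0).coeff (N + 1)
        = (α / ε - 1) + (δ - 1) + P0.nextCoeff := by
      have h1 : (N + 1 : ℕ) = ((C (α / ε - 1) + X) * (C (δ - 1) + X) * P0).natDegree - 1 := by
        omega
      rw [h1, ← nextCoeff_of_natDegree_pos (by rw [hAd]; omega)]
      rw [(ha.mul hb).nextCoeff_mul hm0, ha.nextCoeff_mul hb]
      rw [add_comm (C (α / ε - 1)) X, add_comm (C (δ - 1)) X,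
        nextCoeff_X_add_C, nextCoeff_X_add_C]
    -- term B
    have hBd : (f * P1).natDegree = N + 2 := by
      rw [hfm.natDegree_mul hm1, hfd, hd1]; ring
    have hBc : (f * P1).coeff (N + 1) = (c - 1) + P1.nextCoeff := by
      have h1 : (N + 1 : ℕ) = (f * P1).natDegree - 1 := by rw [hBd]; omega
      rw [h1, ← nextCoeff_of_natDegree_pos (by rw [hBd]; omega), hfm.nextCoeff_mul hm1, hfn]
    -- term C
    have hx1 : (X - 1 : ℂ[X]).Monic := by
      have := monic_X_sub_C (1 : ℂ); simpa using this
    have hCc : ((X - 1) * P2).coeff (N + 1) = 1 := by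
      have hm := hx1.mul hm2
      have hdeg : ((X - 1) * P2).natDegree = N + 1 := by
        rw [hx1.natDegree_mul hm2, hd2]
        have : (X - 1 : ℂ[X]).natDegree = 1 := by
          have := natDegree_X_sub_C (1 : ℂ); simpa using this
        rw [this]; ring
      have := hm.coeff_natDegree
      rwa [hdeg] at this
    -- combine
    rw [coeff_sub, coeff_add, coeff_neg, hAc, hBc, mul_assoc, coeff_C_mul, hCc, hn0, hn1]
    ring
  refine ⟨key, fun h => ?_⟩
  rw [h, coeff_zero] at key
  linear_combination -key
end

section
/- For the expansion in Kummer functions with fixed lower parameter: let ε ≠ 0 and consider the polynomial in n given by (α/ε - 1 + n)(δ - 1 + n)∏_{k=1}^N(e_k + n) + Q_{n-1}∏_{k=1}^N(e_k - 1 + n) + (α/ε - γ - 1 + n)(n-1)∏_{k=1}^N(e_k - 2 + n), where Q_n = -q + nγ + (α/ε + n)(ε - δ - 2n). Then the coefficient of n^{N+2} vanishes and the coefficient of n^{N+1} equals ε; consequently, since ε ≠ 0, this polynomial is never identically zero. -/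
open Polynomial Finset

lemma quad_mul_coeff (q0 q1 q2 : ℂ) (P : ℂ[X]) (n : ℕ) :
    ((C q0 + C q1 * X + C q2 * X ^ 2) * P).coeff (n + 1)
      = q0 * P.coeff (n + 1) + q1 * P.coeff n + q2 * (X * P).coeff n := by
  have h2 : C q2 * X ^ 2 * P = C q2 * (X * (X * P)) := by ring
  have h1 : C q1 * X * P = C q1 * (X * P) := by ring
  rw [add_mul, add_mul, h1, h2, coeff_add, coeff_add, coeff_C_mul, coeff_C_mul, coeff_C_mul,
    coeff_X_mul, coeff_X_mul]

lemma prodFacts (f : ℕ → ℂ) (N : ℕ) :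
    (∏ k ∈ Icc 1 N, (C (f k) + X)).natDegree ≤ N ∧
    (∏ k ∈ Icc 1 N, (C (f k) + X)).coeff N = 1 ∧
    (X * ∏ k ∈ Icc 1 N, (C (f k) + X)).coeff N = ∑ k ∈ Icc 1 N, f k := by
  induction N with
  | zero => simp
  | succ n ih =>
    obtain ⟨hd, hc, hx⟩ := ih
    have hmem : n + 1 ∉ Icc 1 n := by simp
    have hins : Icc 1 (n + 1) = insert (n + 1) (Icc 1 n) := by
      ext x; simp [Finset.mem_Icc]; omega
    rw [hins, Finset.prod_insert hmem, Finset.sum_insert hmem]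
    set P := ∏ k ∈ Icc 1 n, (C (f k) + X) with hP
    have hcn1 : P.coeff (n + 1) = 0 := coeff_eq_zero_of_natDegree_lt (by omega)
    refine ⟨?_, ?_, ?_⟩
    · calc ((C (f (n+1)) + X) * P).natDegree ≤ (C (f (n+1)) + X).natDegree + P.natDegree :=
            natDegree_mul_le
        _ ≤ 1 + n := by
            gcongr
            simpa [add_comm] using (natDegree_X_add_C_le (f (n+1)))
        _ = n + 1 := by omega
    · rw [add_mul, coeff_add, coeff_C_mul, coeff_X_mul, hcn1, hc]; ring
    · have : X * ((C (f (n+1)) + X) * P) = C (f (n+1)) * (X * P) + X * (X * P) := by ring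
      rw [this, coeff_add, coeff_C_mul]
      simp only [coeff_X_mul]
      rw [hx, hc]; ring

lemma prodShift (e : ℕ → ℂ) (N : ℕ) (a : ℂ) :
    (∏ k ∈ Icc 1 N, (C (e k - a) + X)).coeff N = 1 ∧
    (∏ k ∈ Icc 1 N, (C (e k - a) + X)).coeff (N + 1) = 0 ∧
    (X * ∏ k ∈ Icc 1 N, (C (e k - a) + X)).coeff N = (∑ k ∈ Icc 1 N, e k) - N * a ∧
    (X * ∏ k ∈ Icc 1 N, (C (e k - a) + X)).coeff (N + 1) = 1 ∧
    (∏ k ∈ Icc 1 N, (C (e k - a) + X)).coeff (N + 2) = 0 := by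
  obtain ⟨hd, hc, hx⟩ := prodFacts (fun k => e k - a) N
  have hz : (∏ k ∈ Icc 1 N, (C (e k - a) + X)).coeff (N + 1) = 0 :=
    coeff_eq_zero_of_natDegree_lt (by omega)
  refine ⟨hc, hz, ?_, by rw [coeff_X_mul, hc],
    coeff_eq_zero_of_natDegree_lt (by omega)⟩
  rw [hx, Finset.sum_sub_distrib, Finset.sum_const, Nat.card_Icc]
  simp [nsmul_eq_mul]

/-- For the expansion with fixed lower parameter γ (section 2.2), the reduced
polynomial has vanishing coefficient of n^{N+2}, its coefficient of n^{N+1} equals ε,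
and hence (since ε ≠ 0) it is never identically zero. -/
theorem stmt5 (N : ℕ) (α γ δ ε q : ℂ) (hε : ε ≠ 0) (e : ℕ → ℂ) :
    ((C (α / ε - 1) + X) * (C (δ - 1) + X) * ∏ k ∈ Icc 1 N, (C (e k) + X)
      + (C (-q) + (X - 1) * C γ + (C (α / ε - 1) + X) * (C (ε - δ + 2) - 2 * X)) *
          ∏ k ∈ Icc 1 N, (C (e k - 1) + X)
      + (C (α / ε - γ - 1) + X) * (X - 1) *
          ∏ k ∈ Icc 1 N, (C (e k - 2) + X) : ℂ[X]).coeff (N + 2) = 0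
    ∧ ((C (α / ε - 1) + X) * (C (δ - 1) + X) * ∏ k ∈ Icc 1 N, (C (e k) + X)
      + (C (-q) + (X - 1) * C γ + (C (α / ε - 1) + X) * (C (ε - δ + 2) - 2 * X)) *
          ∏ k ∈ Icc 1 N, (C (e k - 1) + X)
      + (C (α / ε - γ - 1) + X) * (X - 1) *
          ∏ k ∈ Icc 1 N, (C (e k - 2) + X) : ℂ[X]).coeff (N + 1) = ε
    ∧ ((C (α / ε - 1) + X) * (C (δ - 1) + X) * ∏ k ∈ Icc 1 N, (C (e k) + X)
      + (C (-q) + (X - 1) * C γ + (C (α / ε - 1) + X) * (C (ε - δ + 2) - 2 * X)) *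
          ∏ k ∈ Icc 1 N, (C (e k - 1) + X)
      + (C (α / ε - γ - 1) + X) * (X - 1) *
          ∏ k ∈ Icc 1 N, (C (e k - 2) + X) : ℂ[X]) ≠ 0 := by
  obtain ⟨h0c, h0z, h0x, h0x1, h0z2⟩ := prodShift e N 0
  obtain ⟨h1c, h1z, h1x, h1x1, h1z2⟩ := prodShift e N 1
  obtain ⟨h2c, h2z, h2x, h2x1, h2z2⟩ := prodShift e N 2
  simp only [sub_zero] at h0c h0z h0x h0x1 h0z2
  have hA : ((C (α / ε - 1) + X) * (C (δ - 1) + X) : ℂ[X])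
      = C ((α / ε - 1) * (δ - 1)) + C (α / ε + δ - 2) * X + C 1 * X ^ 2 := by
    simp only [map_mul, map_add, map_sub, map_one, map_ofNat]; ring
  have hB : ((C (-q) + (X - 1) * C γ + (C (α / ε - 1) + X) * (C (ε - δ + 2) - 2 * X)) : ℂ[X])
      = C (-q - γ + (α / ε - 1) * (ε - δ + 2)) + C (γ + ε - δ + 4 - 2 * (α / ε)) * X
        + C (-2) * X ^ 2 := by
    simp only [map_mul, map_add, map_sub, map_one, map_neg, map_ofNat]; ring
  have hD : ((C (α / ε - γ - 1) + X) * (X - 1) : ℂ[X])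
      = C (γ + 1 - α / ε) + C (α / ε - γ - 2) * X + C 1 * X ^ 2 := by
    simp only [map_mul, map_add, map_sub, map_one, map_ofNat]; ring
  rw [hA, hB, hD]
  have key2 :
      ((C ((α / ε - 1) * (δ - 1)) + C (α / ε + δ - 2) * X + C 1 * X ^ 2) *
          ∏ k ∈ Icc 1 N, (C (e k) + X)
        + (C (-q - γ + (α / ε - 1) * (ε - δ + 2)) + C (γ + ε - δ + 4 - 2 * (α / ε)) * X
            + C (-2) * X ^ 2) * ∏ k ∈ Icc 1 N, (C (e k - 1) + X)
        + (C (γ + 1 - α / ε) + C (α / ε - γ - 2) * X + C 1 * X ^ 2) *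
            ∏ k ∈ Icc 1 N, (C (e k - 2) + X) : ℂ[X]).coeff (N + 2) = 0 := by
    rw [coeff_add, coeff_add, quad_mul_coeff _ _ _ _ (N + 1), quad_mul_coeff _ _ _ _ (N + 1),
      quad_mul_coeff _ _ _ _ (N + 1), h0z, h0z2, h0x1, h1z, h1z2, h1x1, h2z, h2z2, h2x1]
    ring
  have key1 :
      ((C ((α / ε - 1) * (δ - 1)) + C (α / ε + δ - 2) * X + C 1 * X ^ 2) *
          ∏ k ∈ Icc 1 N, (C (e k) + X)
        + (C (-q - γ + (α / ε - 1) * (ε - δ + 2)) + C (γ + ε - δ + 4 - 2 * (α / ε)) * X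
            + C (-2) * X ^ 2) * ∏ k ∈ Icc 1 N, (C (e k - 1) + X)
        + (C (γ + 1 - α / ε) + C (α / ε - γ - 2) * X + C 1 * X ^ 2) *
            ∏ k ∈ Icc 1 N, (C (e k - 2) + X) : ℂ[X]).coeff (N + 1) = ε := by
    rw [coeff_add, coeff_add, quad_mul_coeff _ _ _ _ N, quad_mul_coeff _ _ _ _ N,
      quad_mul_coeff _ _ _ _ N, h0z, h0c, h0x, h1z, h1c, h1x, h2z, h2c, h2x]
    ring
  refine ⟨key2, key1, fun h => hε ?_⟩
  rw [h] at key1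
  simpa using key1.symm
end

section
/- For the case ε = 0, N = 2: suppose α ≠ 0, γ = -2, e_1 and e_2 are not zero or negative integers, and the relations e_1 + e_2 + q + 3 - 2δ = 0, q(e_1 e_2 - α) + 2α(δ - 1) = 0, and q³ + q²(4 - 3δ) + q(4 - 4α - 6δ + 2δ²) + 4α(δ - 1) = 0 hold. Then c_n = αⁿ Γ(δ-2)(e_1+n)(e_2+n) / (n! Γ(n+δ-2) e_1 e_2) satisfies R_n c_n + Q_{n-1} c_{n-1} + P_{n-2} c_{n-2} = 0 for all n ≥ 2, with R_n = -n(δ + n - 3), Q_n = -q + α + n(δ + n - 3), P_n = -(δ + n)α/(δ + n - 2). -/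
lemma key_id (a d q e1 e2 kk : ℂ) (hq : q ≠ 0)
    (h1 : e1 + e2 + q + 3 - 2 * d = 0)
    (h2 : q * (e1 * e2 - a) + 2 * a * (d - 1) = 0)
    (h3 : q ^ 3 + q ^ 2 * (4 - 3 * d) + q * (4 - 4 * a - 6 * d + 2 * d ^ 2)
      + 4 * a * (d - 1) = 0) :
    -a * (e1 + kk + 2) * (e2 + kk + 2)
      + (-q + a + (kk + 1) * (kk + d - 2)) * (e1 + kk + 1) * (e2 + kk + 1)
      - (kk + d) * (kk + 1) * (e1 + kk) * (e2 + kk) = 0 := by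
  have h : q * (-a * (e1 + kk + 2) * (e2 + kk + 2)
      + (-q + a + (kk + 1) * (kk + d - 2)) * (e1 + kk + 1) * (e2 + kk + 1)
      - (kk + d) * (kk + 1) * (e1 + kk) * (e2 + kk)) = 0 := by
    linear_combination (q * ((kk + 1) * (d - q - kk - 2) - a)) * h1
      - (q + 2 * kk + 2) * h2 + (kk + 1) * h3
  exact (mul_eq_zero.mp h).resolve_left hq

lemma rec3 (R Q NP X D1 D0 M2 M1 c0 c1 c2 : ℂ) (hX : X ≠ 0) (hD1 : D1 ≠ 0) (hD0 : D0 ≠ 0)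
    (hc2 : D1 * c2 = M2 * c1) (hc1 : D0 * c1 = M1 * c0)
    (hkey : X * R * M2 * M1 + X * Q * D1 * M1 + NP * (D1 * D0) = 0) :
    R * c2 + Q * c1 + NP / X * c0 = 0 := by
  have hinv : X * X⁻¹ = 1 := mul_inv_cancel₀ hX
  have h : (X * (D1 * D0)) * (R * c2 + Q * c1 + NP / X * c0) = 0 := by
    linear_combination (X * D0 * R) * hc2 + (X * R * M2 + X * Q * D1) * hc1
      + c0 * hkey + (NP * D1 * D0 * c0) * hinv
  exact (mul_eq_zero.mp h).resolve_left (mul_ne_zero hX (mul_ne_zero hD1 hD0))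

set_option maxHeartbeats 1000000 in
/-- For ε = 0, N = 2: with α ≠ 0, γ = -2, e₁, e₂ not zero or negative
integers, and the relations (58)-(59), the coefficients
c_n = αⁿ Γ(δ-2)(e₁+n)(e₂+n)/(n! Γ(n+δ-2) e₁ e₂) satisfy the three-term recurrence
for all n ≥ 2. -/
theorem stmt10 (α γ δ q e₁ e₂ : ℂ) (hα : α ≠ 0) (hγ : γ = -2)
    (he₁ : ∀ m : ℕ, e₁ ≠ -(m : ℂ)) (he₂ : ∀ m : ℕ, e₂ ≠ -(m : ℂ))
    (h1 : e₁ + e₂ + q + 3 - 2 * δ = 0)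
    (h2 : q * (e₁ * e₂ - α) + 2 * α * (δ - 1) = 0)
    (h3 : q ^ 3 + q ^ 2 * (4 - 3 * δ) + q * (4 - 4 * α - 6 * δ + 2 * δ ^ 2)
      + 4 * α * (δ - 1) = 0)
    (hδ : ∀ m : ℕ, δ - 2 ≠ -(m : ℂ))
    (c : ℕ → ℂ)
    (hc : ∀ n : ℕ, c n = α ^ n * Complex.Gamma (δ - 2) * (e₁ + (n : ℂ)) * (e₂ + (n : ℂ)) /
      ((n.factorial : ℂ) * Complex.Gamma ((n : ℂ) + δ - 2) * e₁ * e₂)) :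
    ∀ n : ℕ, 2 ≤ n →
      (-(n : ℂ) * (δ + (n : ℂ) - 3)) * c n
      + (-q + α + ((n : ℂ) - 1) * (δ + ((n : ℂ) - 1) - 3)) * c (n - 1)
      + (-((δ + ((n : ℂ) - 2)) * α) / (δ + ((n : ℂ) - 2) - 2)) * c (n - 2) = 0 := by
  have hq : q ≠ 0 := by
    intro h
    have hαδ : α * (δ - 1) = 0 := by
      linear_combination h2 / 2 - (e₁ * e₂ - α) / 2 * h
    rcases mul_eq_zero.mp hαδ with h' | h'
    · exact hα h'
    · exact hδ 1 (by push_cast; linear_combination h')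
  intro n hn
  obtain ⟨k, rfl⟩ := Nat.exists_eq_add_of_le hn
  have hs : δ - 2 + (k : ℂ) ≠ 0 := by
    intro h; exact hδ k (by linear_combination h)
  have hs1 : δ - 2 + (k : ℂ) + 1 ≠ 0 := by
    intro h; exact hδ (k + 1) (by push_cast; linear_combination h)
  have hG : Complex.Gamma (δ - 2 + (k : ℂ)) ≠ 0 := by
    apply Complex.Gamma_ne_zero
    intro m h
    exact hδ (m + k) (by push_cast; linear_combination h)
  have he1 : e₁ ≠ 0 := by have := he₁ 0; simpa using this
  have he2 : e₂ ≠ 0 := by have := he₂ 0; simpa using this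
  have hE1k : e₁ + (k : ℂ) ≠ 0 := by
    intro h; exact he₁ k (by linear_combination h)
  have hE2k : e₂ + (k : ℂ) ≠ 0 := by
    intro h; exact he₂ k (by linear_combination h)
  have hE1k1 : e₁ + (k : ℂ) + 1 ≠ 0 := by
    intro h; exact he₁ (k + 1) (by push_cast; linear_combination h)
  have hE2k1 : e₂ + (k : ℂ) + 1 ≠ 0 := by
    intro h; exact he₂ (k + 1) (by push_cast; linear_combination h)
  have hk1 : ((k : ℂ) + 1) ≠ 0 := by
    have : ((k : ℂ) + 1) = ((k + 1 : ℕ) : ℂ) := by push_cast; ring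
    rw [this]
    exact Nat.cast_ne_zero.mpr (Nat.succ_ne_zero k)
  have hk2 : ((k : ℂ) + 2) ≠ 0 := by
    have : ((k : ℂ) + 2) = ((k + 2 : ℕ) : ℂ) := by push_cast; ring
    rw [this]
    exact Nat.cast_ne_zero.mpr (by omega)
  have hfk : ((k.factorial : ℂ)) ≠ 0 := Nat.cast_ne_zero.mpr k.factorial_ne_zero
  have gam1 : Complex.Gamma (((k + 1 : ℕ) : ℂ) + δ - 2)
      = (δ - 2 + (k : ℂ)) * Complex.Gamma (δ - 2 + (k : ℂ)) := by
    rw [show (((k + 1 : ℕ) : ℂ) + δ - 2) = (δ - 2 + (k : ℂ)) + 1 by push_cast; ring,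
      Complex.Gamma_add_one _ hs]
  have gam2 : Complex.Gamma (((2 + k : ℕ) : ℂ) + δ - 2)
      = (δ - 2 + (k : ℂ) + 1) * ((δ - 2 + (k : ℂ)) * Complex.Gamma (δ - 2 + (k : ℂ))) := by
    rw [show (((2 + k : ℕ) : ℂ) + δ - 2) = (δ - 2 + (k : ℂ) + 1) + 1 by push_cast; ring,
      Complex.Gamma_add_one _ hs1, Complex.Gamma_add_one _ hs]
  have gam0 : Complex.Gamma (((k : ℕ) : ℂ) + δ - 2) = Complex.Gamma (δ - 2 + (k : ℂ)) := by
    congr 1; ring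
  have hfac2 : (((2 + k).factorial : ℂ)) = ((k : ℂ) + 2) * (((k : ℂ) + 1) * (k.factorial : ℂ)) := by
    rw [show 2 + k = (k + 1) + 1 by omega, Nat.factorial_succ, Nat.factorial_succ]
    push_cast; ring
  have hfac1 : (((k + 1).factorial : ℂ)) = ((k : ℂ) + 1) * (k.factorial : ℂ) := by
    rw [Nat.factorial_succ]; push_cast; ring
  have hn1 : 2 + k - 1 = k + 1 := by omega
  have hn2 : 2 + k - 2 = k := by omega
  have hcast : ((2 + k : ℕ) : ℂ) = (k : ℂ) + 2 := by push_cast; ring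
  have hcast1 : ((k + 1 : ℕ) : ℂ) = (k : ℂ) + 1 := by push_cast; ring
  -- cross-multiplied ratio identities
  have hden1 : (((k : ℂ) + 1) * (k.factorial : ℂ))
      * ((δ - 2 + (k : ℂ)) * Complex.Gamma (δ - 2 + (k : ℂ))) * e₁ * e₂ ≠ 0 :=
    mul_ne_zero (mul_ne_zero (mul_ne_zero (mul_ne_zero hk1 hfk) (mul_ne_zero hs hG)) he1) he2
  have hden0 : (k.factorial : ℂ) * Complex.Gamma (δ - 2 + (k : ℂ)) * e₁ * e₂ ≠ 0 :=
    mul_ne_zero (mul_ne_zero (mul_ne_zero hfk hG) he1) he2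
  have hden2 : (((k : ℂ) + 2) * (((k : ℂ) + 1) * (k.factorial : ℂ)))
      * ((δ - 2 + (k : ℂ) + 1) * ((δ - 2 + (k : ℂ)) * Complex.Gamma (δ - 2 + (k : ℂ)))) * e₁ * e₂ ≠ 0 :=
    mul_ne_zero (mul_ne_zero (mul_ne_zero (mul_ne_zero hk2 (mul_ne_zero hk1 hfk))
      (mul_ne_zero hs1 (mul_ne_zero hs hG))) he1) he2
  have hcc1x : (((k : ℂ) + 1) * (δ - 2 + (k : ℂ)) * (e₁ + (k : ℂ)) * (e₂ + (k : ℂ))) * c (k + 1)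
      = (α * (e₁ + (k : ℂ) + 1) * (e₂ + (k : ℂ) + 1)) * c k := by
    rw [hc (k + 1), hc k, gam1, gam0, hfac1, hcast1, mul_div_assoc', mul_div_assoc',
      div_eq_div_iff hden1 hden0]
    ring
  have hcc2x : (((k : ℂ) + 2) * (δ - 2 + (k : ℂ) + 1) * (e₁ + (k : ℂ) + 1) * (e₂ + (k : ℂ) + 1)) * c (2 + k)
      = (α * (e₁ + (k : ℂ) + 2) * (e₂ + (k : ℂ) + 2)) * c (k + 1) := by
    rw [hc (2 + k), hc (k + 1), gam2, gam1, hfac2, hfac1, hcast, hcast1, mul_div_assoc',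
      mul_div_assoc', div_eq_div_iff hden2 hden1]
    ring
  have key := key_id α δ q e₁ e₂ (k : ℂ) hq h1 h2 h3
  have hs' : δ + (k : ℂ) - 2 ≠ 0 := by intro h; exact hs (by linear_combination h)
  have hinv : (δ + (k : ℂ) - 2) * (δ + (k : ℂ) - 2)⁻¹ = 1 := mul_inv_cancel₀ hs'
  rw [hn1, hn2, hcast]
  have hfin := rec3 (-(((k : ℂ)) + 2) * (δ + (((k : ℂ)) + 2) - 3))
      (-q + α + ((((k : ℂ)) + 2) - 1) * (δ + ((((k : ℂ)) + 2) - 1) - 3))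
      (-((δ + ((((k : ℂ)) + 2) - 2)) * α))
      (δ + ((((k : ℂ)) + 2) - 2) - 2)
      (((k : ℂ) + 2) * (δ - 2 + (k : ℂ) + 1) * (e₁ + (k : ℂ) + 1) * (e₂ + (k : ℂ) + 1))
      (((k : ℂ) + 1) * (δ - 2 + (k : ℂ)) * (e₁ + (k : ℂ)) * (e₂ + (k : ℂ)))
      (α * (e₁ + (k : ℂ) + 2) * (e₂ + (k : ℂ) + 2))
      (α * (e₁ + (k : ℂ) + 1) * (e₂ + (k : ℂ) + 1))
      (c k) (c (k + 1)) (c (2 + k))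
      (by intro h; exact hs' (by linear_combination h))
      (mul_ne_zero (mul_ne_zero (mul_ne_zero hk2 hs1) hE1k1) hE2k1)
      (mul_ne_zero (mul_ne_zero (mul_ne_zero hk1 hs) hE1k) hE2k)
      hcc2x hcc1x
      (by linear_combination (α * (δ + ((((k : ℂ)) + 2) - 2) - 2) * ((k : ℂ) + 2)
        * (δ - 2 + (k : ℂ) + 1) * (e₁ + (k : ℂ) + 1) * (e₂ + (k : ℂ) + 1)) * key)
  linear_combination hfin
end

section
/- For N = 1 with ε ≠ 0 and γ = α/ε + 2: if e_1 = q - α + δ - ε + α(1+δ)/ε, then the constant term and linear coefficient (in n) of the polynomial -(α/ε - 1 + n)(δ - 1 + n)(e_1 + n) + Q_{n-1}(e_1 - 1 + n) - ε(n-1)(e_1 - 2 + n), where Q_n = -q + α + (γ + δ + ε + n - 1)n, both vanish if and only if q satisfies q² + q(α(1+2δ)/ε - 2α - ε + δ) + (α/ε)((α/ε)(δ-ε)(1+δ-ε) + δ + δ² - 2δε + ε²) = 0. -/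
open Polynomial

/-- For N = 1, ε ≠ 0, γ = α/ε + 2 and e₁ = q - α + δ - ε + α(1+δ)/ε, the
constant and linear coefficients of the reduced polynomial both vanish if and only if
q satisfies the quadratic equation (20). -/
theorem stmt14 (α γ δ ε q e₁ : ℂ) (hε : ε ≠ 0)
    (hγ : γ = α / ε + 2)
    (he₁ : e₁ = q - α + δ - ε + α * (1 + δ) / ε) :
    ((-((C (α / ε - 1) + X) * (C (δ - 1) + X) * (C e₁ + X))
      + (C (-q + α) + (C (γ + δ + ε - 2) + X) * (X - 1)) * (C (e₁ - 1) + X)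
      - C ε * (X - 1) * (C (e₁ - 2) + X) : ℂ[X]).coeff 0 = 0
    ∧ (-((C (α / ε - 1) + X) * (C (δ - 1) + X) * (C e₁ + X))
      + (C (-q + α) + (C (γ + δ + ε - 2) + X) * (X - 1)) * (C (e₁ - 1) + X)
      - C ε * (X - 1) * (C (e₁ - 2) + X) : ℂ[X]).coeff 1 = 0)
    ↔ q ^ 2 + q * (α * (1 + 2 * δ) / ε - 2 * α - ε + δ)
        + (α / ε) * ((α / ε) * (δ - ε) * (1 + δ - ε) + δ + δ ^ 2 - 2 * δ * ε + ε ^ 2) = 0 := by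
  obtain ⟨A, rfl⟩ : ∃ A, α = A * ε := ⟨α / ε, by field_simp⟩
  have hA : A * ε / ε = A := mul_div_cancel_right₀ A hε
  rw [hA] at hγ ⊢
  have hd : A * ε * (1 + 2 * δ) / ε = A * (1 + 2 * δ) := by
    rw [mul_comm A ε, mul_assoc, mul_div_cancel_left₀ _ hε]
  have hd2 : A * ε * (1 + δ) / ε = A * (1 + δ) := by
    rw [mul_comm A ε, mul_assoc, mul_div_cancel_left₀ _ hε]
  rw [hd] at *
  rw [hd2] at he₁
  set P : ℂ[X] := -((C (A - 1) + X) * (C (δ - 1) + X) * (C e₁ + X))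
      + (C (-q + A * ε) + (C (γ + δ + ε - 2) + X) * (X - 1)) * (C (e₁ - 1) + X)
      - C ε * (X - 1) * (C (e₁ - 2) + X) with hP
  have h1 : P.coeff 1 = P.derivative.eval 0 := by
    rw [← coeff_zero_eq_eval_zero, coeff_derivative]; ring
  have h0 : P.coeff 0 = P.eval 0 := coeff_zero_eq_eval_zero P
  rw [h0, h1, hP]
  subst hγ he₁
  simp only [derivative_add, derivative_sub, derivative_neg, derivative_mul, derivative_C,
    derivative_X, derivative_one, eval_add, eval_sub, eval_neg, eval_mul, eval_C, eval_X,
    eval_one, eval_zero]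
  constructor
  · rintro ⟨ha, _⟩
    linear_combination -ha
  · intro h
    exact ⟨by linear_combination -h, by ring⟩
end

section
/- Let N = 2 and ε ≠ 0, γ = α/ε + 3. If e_1, e_2 satisfy e_1 + e_2 = q + 1 - α + 2δ - 2ε + α(2+δ)/ε and 2e_1e_2 + (ε - δ - q - (α/ε)(1 + δ - ε))(e_1 + e_2) - (α + 2αδ + ε(δ + ε))/ε = 0, and q satisfies the cubic equation (24) of the paper, then the polynomial in n given by -(α/ε - 1 + n)(δ - 1 + n)(e_1 + n)(e_2 + n) + Q_{n-1}(e_1 - 1 + n)(e_2 - 1 + n) - ε(n-1)(e_1 - 2 + n)(e_2 - 2 + n), with Q_n = -q + α + (γ + δ + ε + n - 1)n, vanishes identically in n. -/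
/-- For N = 2, ε ≠ 0, γ = α/ε + 3: if e₁, e₂ satisfy (25)-(26) and q
satisfies the cubic (24), then the reduced polynomial vanishes identically in n. -/
theorem stmt17 (α γ δ ε q e₁ e₂ : ℂ) (hε : ε ≠ 0)
    (hγ : γ = α / ε + 3)
    (h25 : e₁ + e₂ = q + 1 - α + 2 * δ - 2 * ε + α * (2 + δ) / ε)
    (h26 : 2 * e₁ * e₂ + (ε - δ - q - (α / ε) * (1 + δ - ε)) * (e₁ + e₂)
      - (α + 2 * α * δ + ε * (δ + ε)) / ε = 0)
    (h24 : q ^ 3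
      + q ^ 2 * (1 + 3 * δ - 3 * ε - 3 * α + 3 * α * (1 + δ) / ε)
      + q * ((α ^ 2 / ε ^ 2) * (2 + 3 * δ ^ 2 - 6 * δ * (ε - 1) + 3 * ε * (ε - 2))
        + 2 * (α / ε) * (1 + 3 * δ ^ 2 + δ * (5 - 6 * ε) + 3 * ε * (ε - 1))
        + 2 * (δ + δ ^ 2 - 2 * δ * ε + ε ^ 2))
      + (α / ε) * ((α ^ 2 / ε ^ 2) * (δ - ε) * (1 + δ - ε) * (2 + δ - ε)
        + (α / ε) * (1 + δ - ε) * (3 * δ * (2 + δ) - 2 * (1 + 3 * δ) * ε + 3 * ε ^ 2)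
        + 2 * (δ * (1 + δ) * (2 + δ) - 3 * δ * (1 + δ) * ε + 3 * δ * ε ^ 2 - ε ^ 3)) = 0) :
    ∀ n : ℂ,
      -((α / ε - 1 + n) * (δ - 1 + n) * (e₁ + n) * (e₂ + n))
      + (-q + α + (γ + δ + ε + (n - 1) - 1) * (n - 1)) * (e₁ - 1 + n) * (e₂ - 1 + n)
      - ε * (n - 1) * (e₁ - 2 + n) * (e₂ - 2 + n) = 0 := by
  intro n
  subst hγ
  obtain ⟨β, rfl⟩ : ∃ β, α = ε * β := ⟨α / ε, (mul_div_cancel₀ α hε).symm⟩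
  simp only [mul_div_cancel_left₀ _ hε]
  have H25 : e₁ + e₂ = q + 1 - ε*β + 2*δ - 2*ε + β*(2+δ) := by
    refine mul_right_cancel₀ hε ?_
    field_simp at h25
    linear_combination ε * h25
  have H26 : 2*e₁*e₂ + (ε - δ - q - β*(1+δ-ε))*(e₁+e₂) - (β + 2*β*δ + δ + ε) = 0 := by
    refine mul_right_cancel₀ hε ?_
    field_simp at h26
    linear_combination ε * h26
  have H24 : q^3 + q^2*(1 + 3*δ - 3*ε - 3*ε*β + 3*β*(1+δ))
      + q*(β^2*(2 + 3*δ^2 - 6*δ*(ε-1) + 3*ε*(ε-2))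
        + 2*β*(1 + 3*δ^2 + δ*(5 - 6*ε) + 3*ε*(ε-1))
        + 2*(δ + δ^2 - 2*δ*ε + ε^2))
      + β*(β^2*(δ-ε)*(1+δ-ε)*(2+δ-ε)
        + β*(1+δ-ε)*(3*δ*(2+δ) - 2*(1+3*δ)*ε + 3*ε^2)
        + 2*(δ*(1+δ)*(2+δ) - 3*δ*(1+δ)*ε + 3*δ*ε^2 - ε^3)) = 0 := by
    refine mul_right_cancel₀ (pow_ne_zero 5 hε) ?_
    field_simp at h24
    linear_combination ε ^ 5 * h24
  linear_combination (1 + -2*n + n^2 + (-1/2 : ℂ)*q^2 + (1/2 : ℂ)*ε*q + (-1/2 : ℂ)*δ*q + (-1/2 : ℂ)*β*q + β*ε*q + (-1/2 : ℂ)*β*ε^2 + -1*β*δ + -1*β*δ*q + β*δ*ε + (-1/2 : ℂ)*β*δ^2 + (1/2 : ℂ)*β^2*ε + (-1/2 : ℂ)*β^2*ε^2 + (-1/2 : ℂ)*β^2*δ + β^2*δ*ε + (-1/2 : ℂ)*β^2*δ^2) * H25 + (-1 + n + (-1/2 : ℂ)*q + (1/2 : ℂ)*β*ε + (-1/2 :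 ℂ)*β*δ) * H26 + (-1/2 : ℂ) * H24
end
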